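/- Let ψ ∈ L²(ℝ) be such that its Fourier transform ψ̂ is continuous, and suppose: (i) there exists ξ₀ ≠ 0 such that inf_{a∈[1,2]} |ψ̂(aξ₀)| > 0 and inf_{a∈[1,2]} |ψ̂(−aξ₀)| > 0; and (ii) there exists C > 0 with |ψ̂(ξ)|² ≤ C|ξ|/(1+|ξ|)² for all ξ ∈ ℝ. Then there exist constants 0 < A ≤ B < ∞ such that A ≤ Σ_{j∈ℤ} |ψ̂(2^j ξ)|² ≤ B for every ξ ≠ 0; i.e. the Fourier symbol m_Ψ(ξ) = Σ_{j∈ℤ} |ψ̂(2^j ξ)|² of the semi-discrete dyadic wavelet system is bounded above and below. -/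

import Mathlib

open MeasureTheory ComplexConjugate
open scoped InnerProductSpace FourierTransform ENNReal

lemma aux_eq (n : ℕ) : (2:ℝ) ^ (-(n:ℤ)) = (2⁻¹ : ℝ) ^ n := by
  rw [zpow_neg, zpow_natCast, inv_pow]

lemma aux_summable_nat : Summable (fun n : ℕ => (2:ℝ) ^ (-(n:ℤ))) :=
  Summable.congr (summable_geometric_of_lt_one (by norm_num) (by norm_num))
    (fun n => (aux_eq n).symm)

lemma aux_tsum_nat : ∑' n : ℕ, (2:ℝ) ^ (-(n:ℤ)) = 2 := by
  rw [tsum_congr aux_eq, tsum_geometric_of_lt_one (by norm_num) (by norm_num)]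
  norm_num

lemma aux_eq2 (n : ℕ) : (2:ℝ) ^ (-|(n:ℤ)|) = (2:ℝ) ^ (-(n:ℤ)) := by
  rw [abs_of_nonneg (Int.natCast_nonneg n)]

lemma aux_eq3 (n : ℕ) : (2:ℝ) ^ (-|(-(n:ℤ))|) = (2:ℝ) ^ (-(n:ℤ)) := by
  rw [abs_neg, abs_of_nonneg (Int.natCast_nonneg n)]

lemma aux_s1 : Summable (fun n : ℕ => (2:ℝ) ^ (-|(n:ℤ)|)) :=
  Summable.congr aux_summable_nat (fun n => (aux_eq2 n).symm)

lemma aux_s2 : Summable (fun n : ℕ => (2:ℝ) ^ (-|(-(n:ℤ))|)) :=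
  Summable.congr aux_summable_nat (fun n => (aux_eq3 n).symm)

lemma aux_summable_abs : Summable (fun j : ℤ => (2:ℝ) ^ (-|j|)) :=
  Summable.of_nat_of_neg aux_s1 aux_s2

lemma aux_tsum_abs_le : ∑' j : ℤ, (2:ℝ) ^ (-|j|) ≤ 3 := by
  have h := (HasSum.of_nat_of_neg (f := fun j : ℤ => (2:ℝ) ^ (-|j|))
    aux_s1.hasSum aux_s2.hasSum).tsum_eq
  rw [h, tsum_congr aux_eq2, tsum_congr aux_eq3, aux_tsum_nat]
  norm_num

lemma aux_summable_shift (j₀ : ℤ) : Summable (fun j : ℤ => (2:ℝ) ^ (-|j - j₀|)) := by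
  have h := ((Equiv.subRight j₀).summable_iff
    (f := fun k : ℤ => (2:ℝ) ^ (-|k|))).mpr aux_summable_abs
  simpa [Function.comp_def] using h

lemma aux_tsum_shift_le (j₀ : ℤ) : ∑' j : ℤ, (2:ℝ) ^ (-|j - j₀|) ≤ 3 := by
  have h := (Equiv.subRight j₀).tsum_eq (fun k : ℤ => (2:ℝ) ^ (-|k|))
  simp only [Equiv.subRight_apply] at h
  rw [h]; exact aux_tsum_abs_le

/-- Let `ψ ∈ L²(ℝ)` with continuous (representative of its)
Fourier–Plancherel transform `ψhat` (here `F` is the Plancherel transform on `L²(ℝ)`,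
agreeing with `𝓕` on `L¹ ∩ L²`). Assume
(i) there is `ξ₀ ≠ 0` with `inf_{a∈[1,2]} |ψhat (a ξ₀)| > 0` and
`inf_{a∈[1,2]} |ψhat (-a ξ₀)| > 0`, and
(ii) there is `C > 0` with `|ψhat ξ|² ≤ C |ξ| / (1+|ξ|)²` for all `ξ`.
Then there are `0 < A ≤ B` with `A ≤ ∑_{j∈ℤ} |ψhat (2^j ξ)|² ≤ B` for every `ξ ≠ 0`;
i.e. the symbol of the semi-discrete dyadic wavelet system is bounded above and below. -/
theorem stmt_15
    (F : Lp ℂ 2 (volume : Measure ℝ) ≃ₗᵢ[ℂ] Lp ℂ 2 (volume : Measure ℝ))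
    (hF : ∀ (f : ℝ → ℂ) (hf1 : Integrable f volume) (hf2 : MemLp f 2 volume),
        (F (hf2.toLp f) : ℝ → ℂ) =ᵐ[volume] 𝓕 f)
    (ψ : ℝ → ℂ) (hψ : MemLp ψ 2 volume)
    (ψhat : ℝ → ℂ)
    (hψhat : (F (hψ.toLp ψ) : ℝ → ℂ) =ᵐ[volume] ψhat)
    (hcont : Continuous ψhat)
    (ξ₀ : ℝ) (hξ₀ : ξ₀ ≠ 0)
    (hinf₁ : 0 < ⨅ a : Set.Icc (1 : ℝ) 2, ‖ψhat ((a : ℝ) * ξ₀)‖)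
    (hinf₂ : 0 < ⨅ a : Set.Icc (1 : ℝ) 2, ‖ψhat (-((a : ℝ) * ξ₀))‖)
    (C : ℝ) (hC : 0 < C)
    (hdecay : ∀ ξ : ℝ, ‖ψhat ξ‖ ^ 2 ≤ C * |ξ| / (1 + |ξ|) ^ 2) :
    ∃ A B : ℝ, 0 < A ∧ A ≤ B ∧
      ∀ ξ : ℝ, ξ ≠ 0 →
        A ≤ (∑' j : ℤ, ‖ψhat ((2 : ℝ) ^ j * ξ)‖ ^ 2) ∧
        (∑' j : ℤ, ‖ψhat ((2 : ℝ) ^ j * ξ)‖ ^ 2) ≤ B := by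
  set c₁ := ⨅ a : Set.Icc (1 : ℝ) 2, ‖ψhat ((a : ℝ) * ξ₀)‖ with hc₁
  set c₂ := ⨅ a : Set.Icc (1 : ℝ) 2, ‖ψhat (-((a : ℝ) * ξ₀))‖ with hc₂
  have hmin : 0 < min c₁ c₂ := lt_min hinf₁ hinf₂
  refine ⟨(min c₁ c₂) ^ 2, (min c₁ c₂) ^ 2 + 6 * C, pow_pos hmin 2,
    le_add_of_nonneg_right (by positivity), ?_⟩
  intro ξ hξ
  have hs : (0:ℝ) < |ξ| := abs_pos.mpr hξ
  set s := |ξ| with hsdef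
  -- choose j₀ with 2^j₀ ≤ s⁻¹ < 2^(j₀+1)
  obtain ⟨j₀, hj₀l, hj₀u⟩ := exists_mem_Ico_zpow (x := s⁻¹) (y := (2:ℝ))
    (by positivity) one_lt_two
  -- main pointwise bound
  have hbound : ∀ j : ℤ, ‖ψhat ((2:ℝ) ^ j * ξ)‖ ^ 2 ≤ 2 * C * (2:ℝ) ^ (-|j - j₀|) := by
    intro j
    have hzp : (0:ℝ) < (2:ℝ) ^ j := by positivity
    have ht : |(2:ℝ) ^ j * ξ| = (2:ℝ) ^ j * s := by
      rw [abs_mul, abs_of_pos hzp]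
    set t := (2:ℝ) ^ j * s with htdef
    have ht0 : 0 < t := by positivity
    have hd := hdecay ((2:ℝ) ^ j * ξ)
    rw [ht] at hd
    rcases le_or_gt j j₀ with hle | hlt
    · -- small frequencies : t ≤ 2^(j - j₀)
      have hmul : s * (2:ℝ) ^ j₀ ≤ 1 := by
        have h := mul_le_mul_of_nonneg_left hj₀l hs.le
        rwa [mul_inv_cancel₀ hs.ne'] at h
      have h1 : s ≤ (2:ℝ) ^ (-j₀) := by
        rw [zpow_neg]
        calc s = s * (2:ℝ) ^ j₀ * ((2:ℝ) ^ j₀)⁻¹ := by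
              field_simp
          _ ≤ 1 * ((2:ℝ) ^ j₀)⁻¹ :=
              mul_le_mul_of_nonneg_right hmul (by positivity)
          _ = ((2:ℝ) ^ j₀)⁻¹ := one_mul _
      have htle : t ≤ (2:ℝ) ^ (j - j₀) := by
        calc t ≤ (2:ℝ) ^ j * (2:ℝ) ^ (-j₀) :=
              mul_le_mul_of_nonneg_left h1 hzp.le
          _ = (2:ℝ) ^ (j - j₀) := by
              rw [← zpow_add₀ (by norm_num : (2:ℝ) ≠ 0), sub_eq_add_neg]
      have habs : -|j - j₀| = j - j₀ := by
        rw [abs_of_nonpos (by omega), neg_neg]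
      calc ‖ψhat ((2:ℝ) ^ j * ξ)‖ ^ 2 ≤ C * t / (1 + t) ^ 2 := hd
        _ ≤ C * t := div_le_self (by positivity) (by nlinarith)
        _ ≤ C * (2:ℝ) ^ (j - j₀) := mul_le_mul_of_nonneg_left htle hC.le
        _ = C * (2:ℝ) ^ (-|j - j₀|) := by rw [habs]
        _ ≤ 2 * C * (2:ℝ) ^ (-|j - j₀|) :=
            mul_le_mul_of_nonneg_right (by linarith) (by positivity)
    · -- large frequencies : t⁻¹ ≤ 2^(j₀ + 1 - j)
      have h1t : t⁻¹ ≤ (2:ℝ) ^ (j₀ + 1 - j) := by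
        have he : j₀ + 1 - j = -j + (j₀ + 1) := by omega
        calc t⁻¹ = (2:ℝ) ^ (-j) * s⁻¹ := by
              rw [htdef, mul_inv, zpow_neg]
          _ ≤ (2:ℝ) ^ (-j) * (2:ℝ) ^ (j₀ + 1) :=
              mul_le_mul_of_nonneg_left hj₀u.le (by positivity)
          _ = (2:ℝ) ^ (j₀ + 1 - j) := by
              rw [← zpow_add₀ (by norm_num : (2:ℝ) ≠ 0), he]
      have hratio : t / (1 + t) ^ 2 ≤ t⁻¹ := by
        rw [div_le_iff₀ (by positivity)]
        have h := inv_mul_cancel₀ ht0.ne'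
        nlinarith [sq_nonneg t, ht0]
      have habs : (2:ℝ) ^ (j₀ + 1 - j) = 2 * (2:ℝ) ^ (-|j - j₀|) := by
        have h1 : -|j - j₀| = j₀ - j := by
          rw [abs_of_nonneg (by omega)]; omega
        rw [h1, show j₀ + 1 - j = 1 + (j₀ - j) by omega,
          zpow_add₀ (by norm_num : (2:ℝ) ≠ 0), zpow_one]
      calc ‖ψhat ((2:ℝ) ^ j * ξ)‖ ^ 2 ≤ C * t / (1 + t) ^ 2 := hd
        _ = C * (t / (1 + t) ^ 2) := by ring
        _ ≤ C * t⁻¹ := mul_le_mul_of_nonneg_left hratio hC.le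
        _ ≤ C * (2:ℝ) ^ (j₀ + 1 - j) := mul_le_mul_of_nonneg_left h1t hC.le
        _ = 2 * C * (2:ℝ) ^ (-|j - j₀|) := by rw [habs]; ring
  have hg : Summable (fun j : ℤ => 2 * C * (2:ℝ) ^ (-|j - j₀|)) :=
    (aux_summable_shift j₀).mul_left (2 * C)
  have hsum : Summable (fun j : ℤ => ‖ψhat ((2:ℝ) ^ j * ξ)‖ ^ 2) :=
    Summable.of_nonneg_of_le (fun j => by positivity) hbound hg
  constructor
  · -- lower bound
    obtain ⟨n, hnl, hnu⟩ := exists_mem_Ico_zpow (x := |ξ| / |ξ₀|) (y := (2:ℝ))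
      (by have := abs_pos.mpr hξ₀; positivity) one_lt_two
    have hzn : (0:ℝ) < (2:ℝ) ^ (-n) := by positivity
    set a := (2:ℝ) ^ (-n) * (|ξ| / |ξ₀|) with hadef
    have hone : (2:ℝ) ^ (-n) * (2:ℝ) ^ n = 1 := by
      rw [← zpow_add₀ (by norm_num : (2:ℝ) ≠ 0)]; simp
    have ha1 : 1 ≤ a := by
      have h := mul_le_mul_of_nonneg_left hnl hzn.le
      rwa [hone] at h
    have ha2 : a ≤ 2 := by
      have h := mul_le_mul_of_nonneg_left hnu.le hzn.le
      have h2 : (2:ℝ) ^ (-n) * (2:ℝ) ^ (n + 1) = 2 := by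
        rw [← zpow_add₀ (by norm_num : (2:ℝ) ≠ 0)]
        norm_num
      rw [h2] at h
      exact h
    have hξ₀' : (0:ℝ) < |ξ₀| := abs_pos.mpr hξ₀
    have habs : |(2:ℝ) ^ (-n) * ξ| = |a * ξ₀| := by
      rw [abs_mul, abs_of_pos hzn, abs_mul, abs_of_nonneg (by linarith : (0:ℝ) ≤ a),
        hadef]
      field_simp
    have hbdd₁ : BddBelow (Set.range fun a : Set.Icc (1:ℝ) 2 => ‖ψhat ((a:ℝ) * ξ₀)‖) := by
      refine ⟨0, ?_⟩; rintro x ⟨i, rfl⟩; exact norm_nonneg _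
    have hbdd₂ : BddBelow (Set.range fun a : Set.Icc (1:ℝ) 2 => ‖ψhat (-((a:ℝ) * ξ₀))‖) := by
      refine ⟨0, ?_⟩; rintro x ⟨i, rfl⟩; exact norm_nonneg _
    have hkey : min c₁ c₂ ≤ ‖ψhat ((2:ℝ) ^ (-n) * ξ)‖ := by
      rcases abs_eq_abs.mp habs with heq | heq
      · rw [heq]
        exact le_trans (min_le_left _ _) (ciInf_le hbdd₁ (⟨a, ha1, ha2⟩ : Set.Icc (1:ℝ) 2))
      · rw [heq]
        exact le_trans (min_le_right _ _) (ciInf_le hbdd₂ (⟨a, ha1, ha2⟩ : Set.Icc (1:ℝ) 2))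
    have hA : (min c₁ c₂) ^ 2 ≤ ‖ψhat ((2:ℝ) ^ (-n) * ξ)‖ ^ 2 :=
      pow_le_pow_left₀ hmin.le hkey 2
    exact le_trans hA (Summable.le_tsum hsum (-n) (fun j _ => by positivity))
  · -- upper bound
    have h1 : (∑' j : ℤ, ‖ψhat ((2:ℝ) ^ j * ξ)‖ ^ 2)
        ≤ ∑' j : ℤ, 2 * C * (2:ℝ) ^ (-|j - j₀|) := Summable.tsum_le_tsum hbound hsum hg
    have h2 : (∑' j : ℤ, 2 * C * (2:ℝ) ^ (-|j - j₀|)) ≤ 6 * C := by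
      rw [tsum_mul_left]
      have := mul_le_mul_of_nonneg_left (aux_tsum_shift_le j₀) (by positivity : (0:ℝ) ≤ 2 * C)
      linarith
    have hApos : (0:ℝ) < (min c₁ c₂) ^ 2 := pow_pos hmin 2
    linarith
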